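/- Let k be a field of characteristic p > 0 and let λ = rp + a with 0 ≤ a < p, a ≠ p − 1 (so a + 1 ≠ 0 in k). Consider the matrix B(λ) over k[s, s⁻¹, t] (the tridiagonal matrix with (i,j) entry −i·t² if i = j+1, (λ−2i)·st if i = j, (λ−i)·s² if i = j−1). Then the kernel of B(λ), as a k[s,t]-submodule of k[s,t]^{λ+1}, is a free graded k[s,t]-module of rank r + 1, with one basis element homogeneous of degree λ and r basis elements homogeneous of degree p − a − 2. In particular, the associated kernel sheaf on ℙ¹ is O(−λ) ⊕ O(a + 2 − p)^{⊕r}. -/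

import Mathlib

open MvPolynomial

/-- The tridiagonal matrix `B(λ)` over `k[s,t]` (with `s = X 0`, `t = X 1`) representing the
global operator of the Weyl module `V(λ)` pulled back to `ℙ¹`. -/
noncomputable def Bmat (k : Type*) [Field k] (l : ℕ) :
    Matrix (Fin (l + 1)) (Fin (l + 1)) (MvPolynomial (Fin 2) k) :=
  Matrix.of fun i j =>
    if (i : ℕ) = (j : ℕ) + 1 then ((-(i : ℕ) : ℤ) : MvPolynomial (Fin 2) k) * X 1 ^ 2
    else if (i : ℕ) = (j : ℕ) then
      (((l : ℤ) - 2 * (i : ℕ) : ℤ) : MvPolynomial (Fin 2) k) * (X 0 * X 1)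
    else if (j : ℕ) = (i : ℕ) + 1 then
      (((l : ℤ) - (i : ℕ) : ℤ) : MvPolynomial (Fin 2) k) * X 0 ^ 2
    else 0

namespace KerBmat

variable {k : Type*} [Field k]

local notation "R2" => MvPolynomial (Fin 2) k

/-- zero-extension of a `Fin (l+1)`-vector to `ℕ`. -/
noncomputable def Phi (l : ℕ) (x : Fin (l + 1) → R2) : ℕ → R2 :=
  fun n => if h : n < l + 1 then x ⟨n, h⟩ else 0

/-- the `i`-th row of `B(λ)` applied to an `ℕ`-indexed vector. -/
noncomputable def Erow (l : ℕ) (y : ℕ → R2) (i : ℕ) : R2 :=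
  ((-(i : ℕ) : ℤ) : R2) * X 1 ^ 2 * y (i - 1)
    + (((l : ℤ) - 2 * (i : ℕ) : ℤ) : R2) * (X 0 * X 1) * y i
    + (((l : ℤ) - (i : ℕ) : ℤ) : R2) * X 0 ^ 2 * y (i + 1)

theorem mulVec_Bmat (l : ℕ) (x : Fin (l + 1) → R2) (i : Fin (l + 1)) :
    (Bmat k l).mulVec x i = Erow l (Phi l x) i := by
  have hsplit : ∀ j : Fin (l + 1), Bmat k l i j * x j =
      (if (i : ℕ) = (j : ℕ) + 1 then (((-(i : ℕ) : ℤ) : R2) * X 1 ^ 2) * x j else 0)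
        + (if j = i then ((((l : ℤ) - 2 * (i : ℕ) : ℤ) : R2) * (X 0 * X 1)) * x j else 0)
        + (if (j : ℕ) = (i : ℕ) + 1 then ((((l : ℤ) - (i : ℕ) : ℤ) : R2) * X 0 ^ 2) * x j
            else 0) := by
    intro j
    simp only [Bmat, Matrix.of_apply, Fin.ext_iff]
    split_ifs with h1 h2 h3 h4 h5 h6 h7 <;> first | omega | ring
  rw [Matrix.mulVec, dotProduct]
  simp only [hsplit, Finset.sum_add_distrib]
  have h2 : (∑ j : Fin (l + 1),
      if j = i then ((((l : ℤ) - 2 * (i : ℕ) : ℤ) : R2) * (X 0 * X 1)) * x j else 0)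
      = (((l : ℤ) - 2 * (i : ℕ) : ℤ) : R2) * (X 0 * X 1) * Phi l x i := by
    rw [Finset.sum_ite_eq' Finset.univ i]
    simp [Phi, i.isLt]
  have h1 : (∑ j : Fin (l + 1),
      if (i : ℕ) = (j : ℕ) + 1 then (((-(i : ℕ) : ℤ) : R2) * X 1 ^ 2) * x j else 0)
      = ((-(i : ℕ) : ℤ) : R2) * X 1 ^ 2 * Phi l x ((i : ℕ) - 1) := by
    rcases Nat.eq_zero_or_pos (i : ℕ) with h0 | h0
    · rw [Finset.sum_eq_zero, h0]
      · simp [Phi]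
      · intro j _
        rw [if_neg (by omega)]
    · have hlt : (i : ℕ) - 1 < l + 1 := by omega
      have hcond : ∀ j : Fin (l + 1), ((i : ℕ) = (j : ℕ) + 1) ↔ j = ⟨(i : ℕ) - 1, hlt⟩ := by
        intro j; rw [Fin.ext_iff]; simp; omega
      simp only [hcond]
      rw [Finset.sum_ite_eq' Finset.univ]
      simp [Phi, hlt]
  have h3 : (∑ j : Fin (l + 1),
      if (j : ℕ) = (i : ℕ) + 1 then ((((l : ℤ) - (i : ℕ) : ℤ) : R2) * X 0 ^ 2) * x j else 0)
      = (((l : ℤ) - (i : ℕ) : ℤ) : R2) * X 0 ^ 2 * Phi l x ((i : ℕ) + 1) := by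
    rcases Nat.lt_or_ge ((i : ℕ) + 1) (l + 1) with hlt | hge
    · have hcond : ∀ j : Fin (l + 1), ((j : ℕ) = (i : ℕ) + 1) ↔ j = ⟨(i : ℕ) + 1, hlt⟩ := by
        intro j; rw [Fin.ext_iff]
      simp only [hcond]
      rw [Finset.sum_ite_eq' Finset.univ]
      simp [Phi, hlt]
    · rw [Finset.sum_eq_zero, Phi, dif_neg (by omega), mul_zero]
      intro j _
      rw [if_neg (by omega)]
  rw [h1, h2, h3, Erow]

theorem mem_ker_iff (l : ℕ) (x : Fin (l + 1) → R2) :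
    x ∈ LinearMap.ker (Bmat k l).mulVecLin ↔ ∀ i : ℕ, i ≤ l → Erow l (Phi l x) i = 0 := by
  rw [LinearMap.mem_ker]
  constructor
  · intro h i hi
    have := congrFun h ⟨i, by omega⟩
    rwa [Matrix.mulVecLin_apply, mulVec_Bmat] at this
  · intro h
    funext i
    rw [Matrix.mulVecLin_apply, mulVec_Bmat]
    exact h i (by omega)

theorem prime_X0 : Prime (X 0 : R2) := by
  rw [← MulEquiv.prime_iff (MvPolynomial.finSuccEquiv k 1).toRingEquiv.toMulEquiv]
  show Prime ((MvPolynomial.finSuccEquiv k 1) (X 0))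
  rw [MvPolynomial.finSuccEquiv_X_zero]
  exact Polynomial.prime_X

theorem prime_X1 : Prime (X 1 : R2) := by
  rw [← MulEquiv.prime_iff (MvPolynomial.renameEquiv k (Equiv.swap (0 : Fin 2) 1)).toRingEquiv.toMulEquiv]
  show Prime ((MvPolynomial.renameEquiv k (Equiv.swap (0 : Fin 2) 1)) (X 1))
  rw [MvPolynomial.renameEquiv_apply, MvPolynomial.rename_X]
  simp only [Equiv.swap_apply_right]
  exact prime_X0

theorem X0_not_dvd_X1 : ¬ (X 0 : R2) ∣ X 1 := by
  intro ⟨c, hc⟩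
  have := congrArg (MvPolynomial.eval (fun j : Fin 2 => if j = 0 then (0 : k) else 1)) hc
  simp at this

theorem X1_not_dvd_X0 : ¬ (X 1 : R2) ∣ X 0 := by
  intro ⟨c, hc⟩
  have := congrArg (MvPolynomial.eval (fun j : Fin 2 => if j = 1 then (0 : k) else 1)) hc
  simp at this

/-- degree-`l` kernel vector -/
noncomputable def w0 (l : ℕ) : ℕ → R2 := fun i =>
  if i ≤ l then ((-1 : R2) ^ i) * X 0 ^ (l - i) * X 1 ^ i else 0

/-- degree-`μ` kernel vector in the block starting after position `m` -/
noncomputable def wb (μ m : ℕ) : ℕ → R2 := fun i =>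
  if m + 1 ≤ i ∧ i ≤ m + 1 + μ then
    ((Nat.choose μ (i - (m + 1)) : ℕ) : R2) * X 0 ^ (μ - (i - (m + 1))) * X 1 ^ (i - (m + 1))
  else 0

theorem erow_w0 (l : ℕ) (i : ℕ) (hi : i ≤ l) : Erow l (w0 l) i = (0 : R2) := by
  rcases Nat.eq_zero_or_pos i with rfl | h1
  · rcases Nat.eq_zero_or_pos l with rfl | hl
    · simp [Erow, w0]
    · obtain ⟨m, rfl⟩ : ∃ m, l = m + 1 := ⟨l - 1, by omega⟩
      rw [Erow, w0]
      simp only [Nat.zero_sub, Nat.sub_zero, if_pos (by omega : 0 ≤ m + 1),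
        if_pos (by omega : 1 ≤ m + 1)]
      rw [w0, if_pos (by omega : (1:ℕ) ≤ m + 1)]
      have e1 : m + 1 - 1 = m := by omega
      rw [e1]
      push_cast
      ring
  · obtain ⟨j, rfl⟩ : ∃ j, i = j + 1 := ⟨i - 1, by omega⟩
    rcases Nat.lt_or_ge (j + 1) l with hlt | hge
    · obtain ⟨m, rfl⟩ : ∃ m, l = j + m + 2 := ⟨l - j - 2, by omega⟩
      rw [Erow, w0, w0, w0]
      rw [if_pos (by omega : j + 1 - 1 ≤ j + m + 2), if_pos (by omega : j + 1 ≤ j + m + 2),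
        if_pos (by omega : j + 1 + 1 ≤ j + m + 2)]
      have e1 : j + 1 - 1 = j := by omega
      have e2 : j + m + 2 - j = m + 2 := by omega
      have e3 : j + m + 2 - (j + 1) = m + 1 := by omega
      have e4 : j + m + 2 - (j + 1 + 1) = m := by omega
      rw [e1, e2, e3, e4]
      have ec : ((j + m + 2 : ℕ) : ℤ) = (j : ℤ) + m + 2 := by push_cast; ring
      rw [ec]
      push_cast
      ring
    · have : l = j + 1 := by omega
      subst this
      rw [Erow, w0, w0, w0]
      rw [if_pos (by omega : j + 1 - 1 ≤ j + 1), if_pos (le_refl (j + 1)),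
        if_neg (by omega : ¬ j + 1 + 1 ≤ j + 1)]
      have e1 : j + 1 - 1 = j := by omega
      have e2 : j + 1 - j = 1 := by omega
      have e3 : j + 1 - (j + 1) = 0 := by omega
      rw [e1, e2, e3]
      have ec : ((j + 1 : ℕ) : ℤ) = (j : ℤ) + 1 := by push_cast; ring
      rw [ec]
      push_cast
      ring

theorem erow_wb (l μ m : ℕ)
    (hc0 : (((l : ℤ) - (m : ℕ) : ℤ) : R2) = 0)
    (hcp : (((m : ℕ) + (μ : ℕ) + 2 : ℤ) : R2) = 0)
    (i : ℕ) : Erow l (wb μ m) i = (0 : R2) := by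
  have hred : ∀ c B : ℤ, (c - B = 0 ∨ ∃ A A' : ℤ, c - B = ((l : ℤ) - m) * A + ((m : ℤ) + μ + 2) * A') →
      ((c : ℤ) : R2) = ((B : ℤ) : R2) := by
    intro c B h
    rcases h with h | ⟨A, A', h⟩
    · norm_num [show c = B by omega]
    · have : (c : R2) = ((B + (((l : ℤ) - m) * A + ((m : ℤ) + μ + 2) * A') : ℤ) : R2) := by
        norm_num [show c = B + (((l : ℤ) - m) * A + ((m : ℤ) + μ + 2) * A') by omega]
      rw [this]
      push_cast
      rw [show ((l : R2) - m) = (((l : ℤ) - (m : ℕ) : ℤ) : R2) by push_cast; ring,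
        show ((m : R2) + μ + 2) = (((m : ℕ) + (μ : ℕ) + 2 : ℤ) : R2) by push_cast; ring,
        hc0, hcp]
      ring
  rcases Nat.lt_or_ge i (m + 1) with hlow | hhigh
  · -- i ≤ m : first two entries vanish
    have w1 : wb μ m (i - 1) = (0 : R2) := if_neg (by omega)
    have w2 : wb μ m i = (0 : R2) := if_neg (by omega)
    rcases Nat.lt_or_ge i m with hlt | hge
    · have w3 : wb μ m (i + 1) = (0 : R2) := if_neg (by omega)
      rw [Erow, w1, w2, w3]; ring
    · have hieq : (i : ℕ) = m := by omega
      have hco : (((l : ℤ) - (i : ℕ) : ℤ) : R2) = ((0 : ℤ) : R2) :=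
        hred _ 0 (Or.inr ⟨1, 0, by rw [hieq]; ring⟩)
      rw [Erow, w1, w2, hco]
      push_cast; ring
  rcases Nat.lt_or_ge (m + 1 + μ) i with hup | hin
  · -- i ≥ m + μ + 2 : last two entries vanish
    have w2 : wb μ m i = (0 : R2) := if_neg (by omega)
    have w3 : wb μ m (i + 1) = (0 : R2) := if_neg (by omega)
    rcases Nat.lt_or_ge (m + μ + 2) i with hgt | hle
    · have w1 : wb μ m (i - 1) = (0 : R2) := if_neg (by omega)
      rw [Erow, w1, w2, w3]; ring
    · have hieq : (i : ℕ) = m + μ + 2 := by omega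
      have hco : ((-((i : ℕ) : ℤ) : ℤ) : R2) = ((0 : ℤ) : R2) :=
        hred _ 0 (Or.inr ⟨0, -1, by rw [hieq]; push_cast; ring⟩)
      rw [Erow, w2, w3, hco]
      push_cast; ring
  · -- interior : i = m + 1 + d with d ≤ μ
    obtain ⟨d, hdμ, rfl⟩ : ∃ d, d ≤ μ ∧ i = m + 1 + d := ⟨i - (m + 1), by omega, by omega⟩
    have hco1 : ((-((m + 1 + d : ℕ) : ℤ) : ℤ) : R2) = (((μ : ℤ) + 1 - d : ℤ) : R2) :=
      hred _ _ (Or.inr ⟨0, -1, by push_cast; ring⟩)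
    have hco2 : (((l : ℤ) - 2 * ((m + 1 + d : ℕ) : ℤ) : ℤ) : R2) = (((μ : ℤ) - 2 * d : ℤ) : R2) :=
      hred _ _ (Or.inr ⟨1, -1, by push_cast; ring⟩)
    have hco3 : (((l : ℤ) - ((m + 1 + d : ℕ) : ℤ) : ℤ) : R2) = ((-1 - (d : ℤ) : ℤ) : R2) :=
      hred _ _ (Or.inr ⟨1, 0, by push_cast; ring⟩)
    have hw2 : wb μ m (m + 1 + d) = ((Nat.choose μ d : ℕ) : R2) * X 0 ^ (μ - d) * X 1 ^ d := by
      rw [wb]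
      simp only [show m + 1 + d - (m + 1) = d from by omega]
      rw [if_pos (by omega)]
    rcases Nat.eq_zero_or_pos d with rfl | hd1
    · -- d = 0
      have hw1 : wb μ m (m + 1 + 0 - 1) = (0 : R2) := if_neg (by omega)
      rcases Nat.eq_zero_or_pos μ with rfl | hμ1
      · have hw3 : wb 0 m (m + 1 + 0 + 1) = (0 : R2) := if_neg (by omega)
        rw [Erow, hw1, hw3, hco2]
        push_cast; ring
      · obtain ⟨e, rfl⟩ : ∃ e, μ = e + 1 := ⟨μ - 1, by omega⟩
        have hw3 : wb (e + 1) m (m + 1 + 0 + 1)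
            = ((Nat.choose (e + 1) 1 : ℕ) : R2) * X 0 ^ (e + 1 - 1) * X 1 ^ 1 := by
          rw [wb]
          simp only [show m + 1 + 0 + 1 - (m + 1) = 1 from by omega]
          rw [if_pos (by omega)]
        rw [Erow, hw1, hw2, hw3, hco1, hco2, hco3]
        simp only [Nat.choose_one_right, Nat.choose_zero_right, Nat.add_sub_cancel,
          Nat.sub_zero]
        push_cast; ring
    · obtain ⟨d', rfl⟩ : ∃ d', d = d' + 1 := ⟨d - 1, by omega⟩
      have hw1 : wb μ m (m + 1 + (d' + 1) - 1)
          = ((Nat.choose μ d' : ℕ) : R2) * X 0 ^ (μ - d') * X 1 ^ d' := by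
        rw [wb]
        simp only [show m + 1 + (d' + 1) - 1 = m + 1 + d' from by omega,
          show m + 1 + d' - (m + 1) = d' from by omega]
        rw [if_pos (by omega)]
      rcases eq_or_lt_of_le hdμ with heq | hlt2
      · -- d = μ
        obtain rfl : μ = d' + 1 := heq.symm
        have hw3 : wb (d' + 1) m (m + 1 + (d' + 1) + 1) = (0 : R2) := if_neg (by omega)
        rw [Erow, hw1, hw2, hw3, hco1, hco2, hco3]
        rw [Nat.choose_self, Nat.choose_succ_self_right]
        simp only [show d' + 1 - d' = 1 from by omega, show d' + 1 - (d' + 1) = 0 from by omega]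
        push_cast; ring
      · -- 1 ≤ d < μ
        obtain ⟨e, rfl⟩ : ∃ e, μ = d' + e + 2 := ⟨μ - d' - 2, by omega⟩
        have hw3 : wb (d' + e + 2) m (m + 1 + (d' + 1) + 1)
            = ((Nat.choose (d' + e + 2) (d' + 2) : ℕ) : R2) * X 0 ^ (d' + e + 2 - (d' + 2))
              * X 1 ^ (d' + 2) := by
          rw [wb]
          simp only [show m + 1 + (d' + 1) + 1 - (m + 1) = d' + 2 from by omega]
          rw [if_pos (by omega)]
        rw [Erow, hw1, hw2, hw3, hco1, hco2, hco3]
        simp only [show d' + e + 2 - d' = e + 2 from by omega,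
          show d' + e + 2 - (d' + 1) = e + 1 from by omega,
          show d' + e + 2 - (d' + 2) = e from by omega]
        have h1 : Nat.choose (d' + e + 2) (d' + 1) * (d' + 1)
            = Nat.choose (d' + e + 2) d' * (e + 2) := by
          have h := Nat.choose_succ_right_eq (d' + e + 2) d'
          rwa [show d' + e + 2 - d' = e + 2 from by omega] at h
        have h2 : Nat.choose (d' + e + 2) (d' + 2) * (d' + 2)
            = Nat.choose (d' + e + 2) (d' + 1) * (e + 1) := by
          have h := Nat.choose_succ_right_eq (d' + e + 2) (d' + 1)
          rwa [show d' + e + 2 - (d' + 1) = e + 1 from by omega] at h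
        have h1' : ((Nat.choose (d' + e + 2) (d' + 1) : ℕ) : R2) * ((d' : R2) + 1)
            = ((Nat.choose (d' + e + 2) d' : ℕ) : R2) * ((e : R2) + 2) := by
          exact_mod_cast congrArg (fun n : ℕ => (n : R2)) h1
        have h2' : ((Nat.choose (d' + e + 2) (d' + 2) : ℕ) : R2) * ((d' : R2) + 2)
            = ((Nat.choose (d' + e + 2) (d' + 1) : ℕ) : R2) * ((e : R2) + 1) := by
          exact_mod_cast congrArg (fun n : ℕ => (n : R2)) h2
        push_cast
        linear_combination (-(X 0 ^ (e + 2) * X 1 ^ (d' + 2))) * h1'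
          - (X 0 ^ (e + 2) * X 1 ^ (d' + 2)) * h2'

theorem Phi_restrict (l : ℕ) (W : ℕ → R2) (hW : ∀ n, l < n → W n = 0) :
    Phi l (fun i : Fin (l + 1) => W (i : ℕ)) = W := by
  funext n
  rw [Phi]
  split
  · rfl
  · exact (hW n (by omega)).symm

theorem w0_mem (l : ℕ) :
    (fun i : Fin (l + 1) => w0 l (i : ℕ)) ∈ LinearMap.ker (Bmat k l).mulVecLin := by
  rw [mem_ker_iff]
  intro i hi
  rw [Phi_restrict l (w0 l) (fun n hn => if_neg (by omega))]
  exact erow_w0 l i hi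

theorem wb_mem (l μ m : ℕ) (hml : m + 1 + μ ≤ l)
    (hc0 : (((l : ℤ) - (m : ℕ) : ℤ) : R2) = 0)
    (hcp : (((m : ℕ) + (μ : ℕ) + 2 : ℤ) : R2) = 0) :
    (fun i : Fin (l + 1) => wb μ m (i : ℕ)) ∈ LinearMap.ker (Bmat k l).mulVecLin := by
  rw [mem_ker_iff]
  intro i hi
  rw [Phi_restrict l (wb μ m) (fun n hn => if_neg (by omega))]
  exact erow_wb l μ m hc0 hcp i

theorem intcast_ne {p : ℕ} (hp : p.Prime) (hchar : CharP k p) (z : ℤ) (h : ¬ (p : ℤ) ∣ z) :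
    ((z : ℤ) : R2) ≠ 0 := by
  intro h0
  rw [← map_intCast (C : k →+* R2) z, MvPolynomial.C_eq_zero] at h0
  exact h ((CharP.intCast_eq_zero_iff k p z).mp h0)

theorem exists_q {p r a i : ℕ} (ha : a < p) (hil : i < r * p + a) (hd : p ∣ (r * p + a - i)) :
    ∃ q' < r, i = q' * p + a := by
  obtain ⟨c, hc⟩ := hd
  rw [Nat.mul_comm p c] at hc
  rcases Nat.eq_zero_or_pos c with rfl | hc1
  · rw [Nat.zero_mul] at hc
    exact absurd (Nat.sub_eq_zero_iff_le.mp hc) (by omega)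
  · have hcr : c ≤ r := by
      by_contra hgt
      push_neg at hgt
      have h8 : (r + 1) * p ≤ c * p := Nat.mul_le_mul_right p hgt
      have h9 : (r + 1) * p = r * p + p := by ring
      have h3 : c * p ≤ r * p + a := by rw [← hc]; exact Nat.sub_le _ _
      rw [h9] at h8
      set A := r * p
      set B := c * p
      omega
    have hX : r * p + a = c * p + i := (Nat.sub_eq_iff_eq_add (by omega)).mp hc
    have h6 : (r - c) * p = r * p - c * p := Nat.sub_mul r c p
    have h7 : c * p ≤ r * p := Nat.mul_le_mul_right p hcr
    refine ⟨r - c, by omega, ?_⟩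
    rw [h6]
    set A := r * p
    set B := c * p
    omega

theorem exists_q2 {p r a n : ℕ} (ha : a < p) (hn1 : 1 ≤ n) (hnl : n ≤ r * p + a)
    (hd : p ∣ n) : ∃ q' < r, n = q' * p + p := by
  obtain ⟨c, hc⟩ := hd
  rw [Nat.mul_comm p c] at hc
  rcases Nat.eq_zero_or_pos c with rfl | hc1
  · rw [Nat.zero_mul] at hc; omega
  · have hcr : c ≤ r := by
      by_contra hgt
      push_neg at hgt
      have h8 : (r + 1) * p ≤ c * p := Nat.mul_le_mul_right p hgt
      have h9 : (r + 1) * p = r * p + p := by ring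
      rw [h9] at h8
      set A := r * p
      set B := c * p
      omega
    have h6 : (c - 1) * p = c * p - 1 * p := Nat.sub_mul c 1 p
    have h11 : 1 * p ≤ c * p := Nat.mul_le_mul_right p hc1
    refine ⟨c - 1, by omega, ?_⟩
    rw [h6]
    set A := c * p
    omega

theorem inj_low {p r a l : ℕ} (hp : p.Prime) (hchar : CharP k p) (ha : a < p)
    (hl : l = r * p + a) (x : Fin (l + 1) → R2)
    (hx : x ∈ LinearMap.ker (Bmat k l).mulVecLin)
    (h0 : Phi l x 0 = 0) (hq : ∀ q' < r, Phi l x (q' * p + a + 1) = 0) : x = 0 := by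
  have hker := (mem_ker_iff l x).mp hx
  have hzero : ∀ n, Phi l x n = 0 := by
    intro n
    induction n using Nat.strong_induction_on with
    | _ n IH =>
      match n with
      | 0 => exact h0
      | (i + 1) =>
        by_cases hn : l < i + 1
        · rw [Phi, dif_neg (by omega)]
        · have hrow := hker i (by omega)
          rw [Erow, IH i (by omega), IH (i - 1) (by omega)] at hrow
          rw [mul_zero, mul_zero, zero_add, zero_add] at hrow
          by_cases hdvd : p ∣ (l - i)
          · obtain ⟨q', hq', hieq⟩ := exists_q (p := p) (r := r) (a := a) (i := i) ha
              (by omega) (by rw [← hl]; exact hdvd)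
            rw [show i + 1 = q' * p + a + 1 from by rw [hieq]]
            exact hq q' hq'
          · have hne : (((l : ℤ) - (i : ℕ) : ℤ) : R2) ≠ 0 := by
              apply intcast_ne hp hchar
              rw [show (l : ℤ) - (i : ℕ) = ((l - i : ℕ) : ℤ) from by omega]
              rw [Int.natCast_dvd_natCast]
              exact hdvd
            rcases mul_eq_zero.mp hrow with h | h
            · rcases mul_eq_zero.mp h with h' | h'
              · exact absurd h' hne
              · exact absurd h' (pow_ne_zero 2 (MvPolynomial.X_ne_zero 0))
            · exact h
  funext i
  have := hzero (i : ℕ)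
  rwa [Phi, dif_pos i.isLt, Fin.eta] at this

theorem inj_high {p r a l : ℕ} (hp : p.Prime) (hchar : CharP k p) (ha : a < p)
    (hl : l = r * p + a) (x : Fin (l + 1) → R2)
    (hx : x ∈ LinearMap.ker (Bmat k l).mulVecLin)
    (htop : Phi l x l = 0)
    (hq : ∀ q' < r, ∀ n, n + 1 = q' * p + p → Phi l x n = 0) : x = 0 := by
  have hker := (mem_ker_iff l x).mp hx
  have key : ∀ d, Phi l x (l - d) = 0 := by
    intro d
    induction d using Nat.strong_induction_on with
    | _ d IH =>
      rcases Nat.eq_zero_or_pos d with rfl | hd1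
      · rw [Nat.sub_zero]; exact htop
      · by_cases hdle : d ≤ l
        swap
        · rw [show l - d = l - l from by omega]
          exact IH l (by omega)
        by_cases hld : l - d = l
        · rw [hld]; exact htop
        · have hdl : l - d < l := by omega
          have hrow := hker (l - d + 1) (by omega)
          have e1 : l - d + 1 - 1 = l - d := by omega
          have e2 : Phi l x (l - d + 1) = 0 := by
            rw [show l - d + 1 = l - (d - 1) from by omega]
            exact IH (d - 1) (by omega)
          have e3 : Phi l x (l - d + 1 + 1) = 0 := by
            by_cases h : l - d + 1 + 1 ≤ l
            · rw [show l - d + 1 + 1 = l - (d - 2) from by omega]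
              exact IH (d - 2) (by omega)
            · rw [Phi, dif_neg (by omega)]
          rw [Erow, e1, e2, e3] at hrow
          rw [mul_zero, mul_zero, add_zero, add_zero] at hrow
          by_cases hdvd : p ∣ (l - d + 1)
          · obtain ⟨q', hq', heq⟩ := exists_q2 (r := r) (n := l - d + 1) ha (by omega)
              (by omega) hdvd
            exact hq q' hq' (l - d) heq
          · have hne : ((-((l - d + 1 : ℕ) : ℤ) : ℤ) : R2) ≠ 0 := by
              apply intcast_ne hp hchar
              rw [Int.dvd_neg, Int.natCast_dvd_natCast]
              exact hdvd
            rcases mul_eq_zero.mp hrow with h | h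
            · rcases mul_eq_zero.mp h with h' | h'
              · exact absurd h' hne
              · exact absurd h' (pow_ne_zero 2 (MvPolynomial.X_ne_zero 1))
            · exact h
  funext i
  have := key (l - (i : ℕ))
  rw [show l - (l - (i : ℕ)) = (i : ℕ) from by omega] at this
  rwa [Phi, dif_pos i.isLt, Fin.eta] at this

/-- the full candidate basis family -/
noncomputable def Vv (p a l μ r : ℕ) : Fin (r + 1) → Fin (l + 1) → R2 :=
  fun q i => if (q : ℕ) = 0 then w0 l (i : ℕ) else wb μ (((q : ℕ) - 1) * p + a) (i : ℕ)

theorem Vv_zero (p a l μ r : ℕ) :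
    Vv (k := k) p a l μ r 0 = fun i : Fin (l + 1) => w0 l (i : ℕ) := by
  funext i; simp [Vv]

theorem Vv_succ (p a l μ r : ℕ) (j : Fin r) :
    Vv (k := k) p a l μ r j.succ = fun i : Fin (l + 1) => wb μ ((j : ℕ) * p + a) (i : ℕ) := by
  funext i; simp [Vv]

theorem hpR {p : ℕ} (hchar : CharP k p) : ((p : ℕ) : R2) = 0 := by
  rw [← map_natCast (C : k →+* R2) p, CharP.cast_eq_zero k p, map_zero]

theorem hj1 (p : ℕ) {r : ℕ} (j : Fin r) : ((j : ℕ) + 1) * p ≤ r * p :=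
  Nat.mul_le_mul_right p j.isLt

theorem hjp (p : ℕ) {r : ℕ} (j : Fin r) : ((j : ℕ) + 1) * p = (j : ℕ) * p + p := by ring

theorem hjlt (p : ℕ) (hp : 0 < p) {r : ℕ} {j j' : Fin r} (h : (j : ℕ) < (j' : ℕ)) :
    (j : ℕ) * p < (j' : ℕ) * p := Nat.mul_lt_mul_of_lt_of_le h (le_refl p) hp

theorem w0_val (l n : ℕ) (hn : n ≤ l) :
    w0 l n = ((-1 : R2) ^ n) * X 0 ^ (l - n) * X 1 ^ n := by
  rw [w0, if_pos hn]

theorem w0_zero (l : ℕ) : w0 l 0 = (X 0 ^ l : R2) := by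
  rw [w0, if_pos (Nat.zero_le l)]; simp

theorem w0_at_l (l : ℕ) : w0 l l = ((-1 : R2) ^ l) * X 1 ^ l := by
  rw [w0_val l l le_rfl, Nat.sub_self, pow_zero]; ring

theorem wb_lo (μ m : ℕ) : wb μ m (m + 1) = (X 0 ^ μ : R2) := by
  rw [wb]
  simp only [show m + 1 - (m + 1) = 0 from by omega]
  rw [if_pos (by omega)]
  simp

theorem wb_hi (μ m : ℕ) : wb μ m (m + 1 + μ) = (X 1 ^ μ : R2) := by
  rw [wb]
  simp only [show m + 1 + μ - (m + 1) = μ from by omega]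
  rw [if_pos (by omega)]
  simp

theorem wb_out (μ m n : ℕ) (h : n < m + 1 ∨ m + 1 + μ < n) : wb μ m n = (0 : R2) :=
  if_neg (by omega)

/-- the low distinguished coordinate of block `j` -/
abbrev clo (p a : ℕ) (j : ℕ) : ℕ := j * p + a + 1
/-- the high distinguished coordinate of block `j` -/
abbrev chi (p a μ : ℕ) (j : ℕ) : ℕ := j * p + a + 1 + μ

section Main

variable {p r a l μ : ℕ}

theorem Vv_mem (hp : p.Prime) (hchar : CharP k p) (hμp : a + μ + 2 = p)
    (hl : l = r * p + a) (q : Fin (r + 1)) :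
    Vv (k := k) p a l μ r q ∈ LinearMap.ker (Bmat k l).mulVecLin := by
  induction q using Fin.cases with
  | zero => rw [Vv_zero]; exact w0_mem l
  | succ j =>
    rw [Vv_succ]
    have hμZ : (a : ℤ) + μ + 2 = p := by exact_mod_cast hμp
    apply wb_mem
    · have h1 := hj1 p j
      have h2 := hjp p j
      omega
    · rw [show ((l : ℤ) - (((j : ℕ) * p + a : ℕ)) : ℤ) = ((p : ℕ) : ℤ) * ((r : ℤ) - (j : ℕ))
        from by push_cast [hl]; ring]
      push_cast [hpR hchar]
      ring
    · rw [show ((((j : ℕ) * p + a : ℕ) : ℤ) + (μ : ℕ) + 2 : ℤ)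
          = ((p : ℕ) : ℤ) * ((j : ℕ) + 1) from by push_cast; linear_combination hμZ]
      push_cast [hpR hchar]
      ring

theorem clo_le (hμp : a + μ + 2 = p) (hl : l = r * p + a) (j : Fin r) :
    chi p a μ (j : ℕ) ≤ l ∧ clo p a (j : ℕ) ≤ l := by
  have h1 := hj1 p j
  have h2 := hjp p j
  rw [chi, clo]
  omega

theorem wb_ne_lo (hp : p.Prime) (hμp : a + μ + 2 = p) (j j' : Fin r) (hne : j' ≠ j) :
    wb μ ((j' : ℕ) * p + a) (clo p a (j : ℕ)) = (0 : R2) := by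
  apply wb_out
  rw [clo]
  rcases Nat.lt_or_ge (j' : ℕ) (j : ℕ) with h | h
  · right
    have h1 : ((j' : ℕ) + 1) * p ≤ (j : ℕ) * p := Nat.mul_le_mul_right p h
    have h2 := hjp p j'
    omega
  · left
    have hlt : (j : ℕ) < (j' : ℕ) := by
      rcases Nat.lt_or_ge (j : ℕ) (j' : ℕ) with h' | h'
      · exact h'
      · exact absurd (Fin.ext (by omega)) hne
    have h1 : ((j : ℕ) + 1) * p ≤ (j' : ℕ) * p := Nat.mul_le_mul_right p hlt
    have h2 := hjp p j
    omega

theorem wb_ne_hi (hp : p.Prime) (hμp : a + μ + 2 = p) (j j' : Fin r) (hne : j' ≠ j) :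
    wb μ ((j' : ℕ) * p + a) (chi p a μ (j : ℕ)) = (0 : R2) := by
  apply wb_out
  rw [chi]
  rcases Nat.lt_or_ge (j' : ℕ) (j : ℕ) with h | h
  · right
    have h1 : ((j' : ℕ) + 1) * p ≤ (j : ℕ) * p := Nat.mul_le_mul_right p h
    have h2 := hjp p j'
    omega
  · left
    have hlt : (j : ℕ) < (j' : ℕ) := by
      rcases Nat.lt_or_ge (j : ℕ) (j' : ℕ) with h' | h'
      · exact h'
      · exact absurd (Fin.ext (by omega)) hne
    have h1 : ((j : ℕ) + 1) * p ≤ (j' : ℕ) * p := Nat.mul_le_mul_right p hlt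
    have h2 := hjp p j
    omega

theorem wb_at_l (hμp : a + μ + 2 = p) (hl : l = r * p + a) (j : Fin r) :
    wb μ ((j : ℕ) * p + a) l = (0 : R2) := by
  apply wb_out
  right
  have h1 := hj1 p j
  have h2 := hjp p j
  omega

theorem vv_indep (hp : p.Prime) (hμp : a + μ + 2 = p) (hl : l = r * p + a)
    (g : Fin (r + 1) → R2) (hg : (∑ q, g q • Vv (k := k) p a l μ r q) = 0) :
    ∀ q, g q = 0 := by
  have hXl : (X 0 : R2) ^ l ≠ 0 := pow_ne_zero _ (MvPolynomial.X_ne_zero 0)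
  have h0 : g 0 = 0 := by
    have h := congrFun hg ⟨0, by omega⟩
    simp only [Finset.sum_apply, Pi.smul_apply, smul_eq_mul, Pi.zero_apply] at h
    rw [Fin.sum_univ_succ] at h
    rw [Finset.sum_eq_zero (fun j _ => by
      rw [Vv_succ]
      exact mul_eq_zero_of_right _ (wb_out μ _ 0 (Or.inl (by omega)))), add_zero] at h
    rw [Vv_zero] at h
    have h' : g 0 * (X 0 ^ l : R2) = 0 := by rw [← w0_zero l]; exact h
    exact (mul_eq_zero.mp h').resolve_right hXl
  intro q
  induction q using Fin.cases with
  | zero => exact h0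
  | succ j =>
    have hcl := (clo_le hμp hl j).2
    have h := congrFun hg ⟨clo p a (j : ℕ), by omega⟩
    simp only [Finset.sum_apply, Pi.smul_apply, smul_eq_mul, Pi.zero_apply] at h
    rw [Fin.sum_univ_succ, h0, zero_mul, zero_add] at h
    rw [Finset.sum_eq_single j (fun j' _ hne => by
      rw [Vv_succ]
      exact mul_eq_zero_of_right _ (wb_ne_lo hp hμp j j' hne)) (by simp)] at h
    rw [Vv_succ] at h
    have h' : g j.succ * (X 0 ^ μ : R2) = 0 := by
      rw [← wb_lo μ ((j : ℕ) * p + a)]; exact h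
    exact (mul_eq_zero.mp h').resolve_right (pow_ne_zero _ (MvPolynomial.X_ne_zero 0))

end Main

section Span

variable {p r a l μ : ℕ}

theorem sum_coord (gS : Fin (r + 1) → R2) (i : Fin (l + 1)) :
    (∑ q, gS q • Vv (k := k) p a l μ r q) i
      = gS 0 * w0 l (i : ℕ) + ∑ j : Fin r, gS j.succ * wb μ ((j : ℕ) * p + a) (i : ℕ) := by
  simp only [Finset.sum_apply, Pi.smul_apply, smul_eq_mul]
  rw [Fin.sum_univ_succ]
  simp only [Vv_zero, Vv_succ]

theorem vv_span (hp : p.Prime) (hchar : CharP k p) (ha : a < p) (hμp : a + μ + 2 = p)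
    (hl : l = r * p + a) (x : Fin (l + 1) → R2)
    (hx : x ∈ LinearMap.ker (Bmat k l).mulVecLin) :
    ∃ g : Fin (r + 1) → R2, x = ∑ q, g q • Vv (k := k) p a l μ r q := by
  have hker := Vv_mem hp hchar hμp hl
  have hz0 : 0 < l + 1 := by omega
  have hzl : l < l + 1 := by omega
  -- s-side coefficients
  set gS : Fin (r + 1) → R2 := Fin.cases (x ⟨0, hz0⟩)
    (fun j => X 0 ^ (l - μ) * x ⟨clo p a (j : ℕ), by have := (clo_le hμp hl j).2; omega⟩
      - (-1 : R2) ^ (clo p a (j : ℕ)) * x ⟨0, hz0⟩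
        * X 0 ^ (l - clo p a (j : ℕ) - μ) * X 1 ^ (clo p a (j : ℕ))) with hgS
  set yS : Fin (l + 1) → R2 := (X 0 ^ l : R2) • x - ∑ q, gS q • Vv (k := k) p a l μ r q with hyS
  have hySmem : yS ∈ LinearMap.ker (Bmat k l).mulVecLin :=
    Submodule.sub_mem _ (Submodule.smul_mem _ _ hx)
      (Submodule.sum_smul_mem _ _ (fun q _ => hker q))
  have h0S : Phi l yS 0 = 0 := by
    rw [Phi, dif_pos hz0]
    simp only [hyS, Pi.sub_apply, Pi.smul_apply, smul_eq_mul]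
    rw [sum_coord]
    rw [Finset.sum_eq_zero (fun j _ =>
      mul_eq_zero_of_right _ (wb_out μ _ 0 (Or.inl (by omega)))), add_zero]
    rw [show ((⟨0, hz0⟩ : Fin (l + 1)) : ℕ) = 0 from rfl, w0_zero]
    simp only [hgS, Fin.cases_zero]
    ring
  have hqS : ∀ q' < r, Phi l yS (q' * p + a + 1) = 0 := by
    intro q' hq'
    set j : Fin r := ⟨q', hq'⟩ with hj
    have hcl : clo p a q' ≤ l := (clo_le hμp hl j).2
    have hch : chi p a μ q' ≤ l := (clo_le hμp hl j).1
    have hr1 : 1 * p ≤ r * p := Nat.mul_le_mul_right p (by omega)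
    rw [Phi, dif_pos (show q' * p + a + 1 < l + 1 from by
      have := hcl; rw [clo] at this; omega)]
    simp only [hyS, Pi.sub_apply, Pi.smul_apply, smul_eq_mul]
    rw [sum_coord]
    rw [Finset.sum_eq_single j (fun j' _ hne => mul_eq_zero_of_right _
      (wb_ne_lo hp hμp j j' hne)) (by simp)]
    rw [show wb μ ((j : ℕ) * p + a) (clo p a q') = (X 0 ^ μ : R2) from wb_lo μ (q' * p + a)]
    rw [w0_val l (clo p a q') hcl]
    simp only [hgS, Fin.cases_zero, Fin.cases_succ, hj]
    have key : (X 0 : R2) ^ (l - μ) * X 0 ^ μ = X 0 ^ l := by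
      rw [← pow_add]
      congr 1
      rw [clo] at hcl
      omega
    have key2 : (X 0 : R2) ^ (l - clo p a q' - μ) * X 0 ^ μ = X 0 ^ (l - clo p a q') := by
      rw [← pow_add]
      congr 1
      rw [chi] at hch
      rw [clo] at hcl ⊢
      omega
    linear_combination (-(x ⟨clo p a q', by omega⟩)) * key
      + ((-1 : R2) ^ (clo p a q') * x ⟨0, hz0⟩ * X 1 ^ (clo p a q')) * key2
  have hySz : yS = 0 := inj_low hp hchar ha hl yS hySmem h0S hqS
  have eqS : (X 0 ^ l : R2) • x = ∑ q, gS q • Vv (k := k) p a l μ r q := sub_eq_zero.mp hySz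
  -- t-side coefficients
  set gT : Fin (r + 1) → R2 := Fin.cases ((-1 : R2) ^ l * x ⟨l, hzl⟩)
    (fun j => X 1 ^ (l - μ) * x ⟨chi p a μ (j : ℕ), by have := (clo_le hμp hl j).1; omega⟩
      - (-1 : R2) ^ l * x ⟨l, hzl⟩ * (-1 : R2) ^ (chi p a μ (j : ℕ))
        * X 0 ^ (l - chi p a μ (j : ℕ)) * X 1 ^ (chi p a μ (j : ℕ) - μ)) with hgT
  set yT : Fin (l + 1) → R2 := (X 1 ^ l : R2) • x - ∑ q, gT q • Vv (k := k) p a l μ r q with hyT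
  have hyTmem : yT ∈ LinearMap.ker (Bmat k l).mulVecLin :=
    Submodule.sub_mem _ (Submodule.smul_mem _ _ hx)
      (Submodule.sum_smul_mem _ _ (fun q _ => hker q))
  have hsq : (-1 : R2) ^ l * (-1 : R2) ^ l = 1 := by
    rw [← pow_add]
    exact Even.neg_one_pow ⟨l, rfl⟩
  have hlT : Phi l yT l = 0 := by
    rw [Phi, dif_pos hzl]
    simp only [hyT, Pi.sub_apply, Pi.smul_apply, smul_eq_mul]
    rw [sum_coord]
    rw [Finset.sum_eq_zero (fun j _ =>
      mul_eq_zero_of_right _ (by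
        rw [show ((⟨l, hzl⟩ : Fin (l + 1)) : ℕ) = l from rfl]
        exact wb_at_l hμp hl j)), add_zero]
    rw [show ((⟨l, hzl⟩ : Fin (l + 1)) : ℕ) = l from rfl, w0_at_l]
    simp only [hgT, Fin.cases_zero]
    linear_combination (-(x ⟨l, hzl⟩ * X 1 ^ l)) * hsq
  have hqT : ∀ q' < r, ∀ n, n + 1 = q' * p + p → Phi l yT n = 0 := by
    intro q' hq' n hn
    set j : Fin r := ⟨q', hq'⟩ with hj
    have hch : chi p a μ q' ≤ l := (clo_le hμp hl j).1
    have hcl : clo p a q' ≤ l := (clo_le hμp hl j).2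
    have hne : n = chi p a μ q' := by rw [chi]; omega
    subst hne
    rw [Phi, dif_pos (by omega)]
    simp only [hyT, Pi.sub_apply, Pi.smul_apply, smul_eq_mul]
    rw [sum_coord]
    rw [Finset.sum_eq_single j (fun j' _ hne' => mul_eq_zero_of_right _
      (wb_ne_hi hp hμp j j' hne')) (by simp)]
    rw [show wb μ ((j : ℕ) * p + a) (chi p a μ q') = (X 1 ^ μ : R2) from wb_hi μ (q' * p + a)]
    rw [w0_val l (chi p a μ q') hch]
    simp only [hgT, Fin.cases_zero, Fin.cases_succ, hj]
    have key : (X 1 : R2) ^ (l - μ) * X 1 ^ μ = X 1 ^ l := by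
      rw [← pow_add]
      congr 1
      rw [chi] at hch
      omega
    have key2 : (X 1 : R2) ^ (chi p a μ q' - μ) * X 1 ^ μ = X 1 ^ (chi p a μ q') := by
      rw [← pow_add]
      congr 1
      rw [chi]
      omega
    linear_combination (-(x ⟨chi p a μ q', by omega⟩)) * key
      + ((-1 : R2) ^ l * x ⟨l, hzl⟩ * (-1 : R2) ^ (chi p a μ q')
          * X 0 ^ (l - chi p a μ q')) * key2
  have hyTz : yT = 0 := inj_high hp hchar ha hl yT hyTmem hlT hqT
  have eqT : (X 1 ^ l : R2) • x = ∑ q, gT q • Vv (k := k) p a l μ r q := sub_eq_zero.mp hyTz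
  -- combine
  have heq : ∀ q, X 1 ^ l * gS q = X 0 ^ l * gT q := by
    have hcomb : (∑ q, (X 1 ^ l * gS q - X 0 ^ l * gT q) • Vv (k := k) p a l μ r q) = 0 := by
      have e1 : (X 1 ^ l : R2) • ((X 0 ^ l : R2) • x) = (X 0 ^ l : R2) • ((X 1 ^ l : R2) • x) := by
        rw [smul_smul, smul_smul, mul_comm]
      rw [eqS, eqT] at e1
      rw [Finset.smul_sum, Finset.smul_sum] at e1
      simp only [smul_smul] at e1
      have : ∀ q : Fin (r + 1), (X 1 ^ l * gS q - X 0 ^ l * gT q) • Vv (k := k) p a l μ r q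
          = (X 1 ^ l * gS q) • Vv (k := k) p a l μ r q
            - (X 0 ^ l * gT q) • Vv (k := k) p a l μ r q := fun q => sub_smul _ _ _
      rw [Finset.sum_congr rfl (fun q _ => this q), Finset.sum_sub_distrib, e1, sub_self]
    exact fun q => sub_eq_zero.mp (vv_indep hp hμp hl _ hcomb q)
  have hnd : ¬ (X 0 : R2) ∣ X 1 ^ l := fun hd => X0_not_dvd_X1 (prime_X0.dvd_of_dvd_pow hd)
  have hdvd : ∀ q, (X 0 : R2) ^ l ∣ gS q := fun q =>
    prime_X0.pow_dvd_of_dvd_mul_left l hnd ⟨gT q, heq q⟩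
  choose g' hg' using hdvd
  refine ⟨g', funext fun i => ?_⟩
  have hcl := congrFun eqS i
  simp only [Pi.smul_apply, smul_eq_mul] at hcl
  apply mul_left_cancel₀ (pow_ne_zero l (MvPolynomial.X_ne_zero 0) : (X 0 : R2) ^ l ≠ 0)
  rw [hcl]
  simp only [Finset.sum_apply, Pi.smul_apply, smul_eq_mul]
  rw [Finset.mul_sum]
  exact Finset.sum_congr rfl (fun q _ => by rw [hg' q]; ring)

end Span

theorem w0_homog (l n : ℕ) (hn : n ≤ l) : (w0 l n : R2).IsHomogeneous l := by
  rw [w0_val l n hn]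
  have h1 : ((-1 : R2) ^ n).IsHomogeneous 0 := by
    rw [show ((-1 : R2)) ^ n = C ((-1 : k) ^ n) from by rw [map_pow, map_neg, map_one]]
    exact isHomogeneous_C _ _
  have h2 := (isHomogeneous_X k (0 : Fin 2)).pow (l - n)
  have h3 := (isHomogeneous_X k (1 : Fin 2)).pow n
  have h := (h1.mul h2).mul h3
  rwa [show 0 + 1 * (l - n) + 1 * n = l from by omega] at h

theorem wb_homog (μ m n : ℕ) : (wb μ m n : R2).IsHomogeneous μ := by
  rw [wb]
  split
  · next hcond =>
    have hd : n - (m + 1) ≤ μ := by omega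
    have h1 : (((Nat.choose μ (n - (m + 1)) : ℕ) : R2)).IsHomogeneous 0 := by
      rw [show ((Nat.choose μ (n - (m + 1)) : ℕ) : R2)
          = C ((Nat.choose μ (n - (m + 1)) : ℕ) : k) from (map_natCast (C : k →+* R2) _).symm]
      exact isHomogeneous_C _ _
    have h2 := (isHomogeneous_X k (0 : Fin 2)).pow (μ - (n - (m + 1)))
    have h3 := (isHomogeneous_X k (1 : Fin 2)).pow (n - (m + 1))
    have h := (h1.mul h2).mul h3
    rwa [show 0 + 1 * (μ - (n - (m + 1))) + 1 * (n - (m + 1)) = μ from by omega] at h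
  · exact isHomogeneous_zero _ _ _

end KerBmat

/-- For `λ = rp + a`, `0 ≤ a < p`, `a ≠ p − 1`, the kernel of `B(λ)` acting on
`k[s,t]^{λ+1}` is a free `k[s,t]`-module of rank `r + 1`, with one basis element homogeneous
of degree `λ` and `r` basis elements homogeneous of degree `p − a − 2`.  (Hence the kernel
sheaf on `ℙ¹` is `O(−λ) ⊕ O(a + 2 − p)^{⊕ r}`.) -/
theorem ker_Bmat_free_with_degrees {k : Type*} [Field k] {p r a l : ℕ} (hp : p.Prime)
    (hchar : CharP k p) (ha : a < p) (ha1 : a ≠ p - 1) (hl : l = r * p + a) :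
    ∃ b : Module.Basis (Fin (r + 1)) (MvPolynomial (Fin 2) k)
        ↥(LinearMap.ker (Bmat k l).mulVecLin),
      ∀ q : Fin (r + 1), ∀ i : Fin (l + 1),
        MvPolynomial.IsHomogeneous (((b q : Fin (l + 1) → MvPolynomial (Fin 2) k)) i)
          (if (q : ℕ) = 0 then l else p - a - 2) := by
  classical
  have hp2 := hp.two_le
  set μ := p - a - 2 with hμdef
  have hμp : a + μ + 2 = p := by omega
  set Vk : Fin (r + 1) → ↥(LinearMap.ker (Bmat k l).mulVecLin) :=
    fun q => ⟨KerBmat.Vv p a l μ r q, KerBmat.Vv_mem hp hchar hμp hl q⟩ with hVk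
  have hind : LinearIndependent (MvPolynomial (Fin 2) k) Vk := by
    apply LinearIndependent.of_comp ((LinearMap.ker (Bmat k l).mulVecLin).subtype)
    have he : (⇑((LinearMap.ker (Bmat k l).mulVecLin).subtype) ∘ Vk)
        = KerBmat.Vv (k := k) p a l μ r := rfl
    rw [he]
    exact Fintype.linearIndependent_iff.mpr
      (fun g hg => KerBmat.vv_indep hp hμp hl g hg)
  have hsp : ⊤ ≤ Submodule.span (MvPolynomial (Fin 2) k) (Set.range Vk) := by
    intro z _
    obtain ⟨g, hgz⟩ := KerBmat.vv_span hp hchar ha hμp hl z.val z.prop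
    have hz : z = ∑ q, g q • Vk q := by
      apply Subtype.ext
      rw [hgz]
      simp only [AddSubmonoidClass.coe_finset_sum, SetLike.val_smul, hVk]
    rw [hz]
    exact Submodule.sum_smul_mem _ _ (fun q _ => Submodule.subset_span ⟨q, rfl⟩)
  refine ⟨Module.Basis.mk hind hsp, ?_⟩
  intro q i
  rw [Module.Basis.mk_apply]
  show MvPolynomial.IsHomogeneous (KerBmat.Vv (k := k) p a l μ r q i) _
  induction q using Fin.cases with
  | zero =>
    rw [if_pos (by simp)]
    rw [show KerBmat.Vv (k := k) p a l μ r 0 i = KerBmat.w0 l (i : ℕ) from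
      by rw [KerBmat.Vv_zero]]
    exact KerBmat.w0_homog l (i : ℕ) (by omega)
  | succ j =>
    rw [if_neg (by simp)]
    rw [show KerBmat.Vv (k := k) p a l μ r j.succ i
        = KerBmat.wb μ ((j : ℕ) * p + a) (i : ℕ) from by rw [KerBmat.Vv_succ]]
    exact KerBmat.wb_homog μ ((j : ℕ) * p + a) (i : ℕ)
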